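/- Let δ, λ > 0 and set α = −1/√(2δ) + √(1/(2δ) + 1). Then α is the unique solution in (0, ∞) of the equation √(2δ)(1 − x²) = 2x, and α ∈ (0, 1). Moreover, the function u : ℝ → ℝ defined by u(x) = −λx² + λ for |x| ≤ α and u(x) = λ(1 − α²)·exp(−√(2δ)(|x| − α)) for |x| > α is continuously differentiable on ℝ, and u'(x) ≥ −1 for all x ≥ 0 if and only if 2λα ≤ 1. -/

import Mathlib

set_option maxHeartbeats 1000000 in
/-- Let `δ, λ > 0` and `α = −1/√(2δ) + √(1/(2δ) + 1)`. Then `α` is the unique positive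
solution of `√(2δ)(1 − x²) = 2x` and lies in `(0, 1)`. Moreover, `u` defined by
`u(x) = −λx² + λ` for `|x| ≤ α` and `u(x) = λ(1 − α²)e^{−√(2δ)(|x| − α)}` for `|x| > α`
is `C¹` on `ℝ`, and `u'(x) ≥ −1` for all `x ≥ 0` iff `2λα ≤ 1`. -/
theorem statement15 (δ lam α : ℝ) (hδ : 0 < δ) (hlam : 0 < lam)
    (hα : α = -1/Real.sqrt (2*δ) + Real.sqrt (1/(2*δ) + 1))
    (u : ℝ → ℝ)
    (hu : ∀ x : ℝ, u x =
      if |x| ≤ α then -lam*x^2 + lam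
      else lam*(1 - α^2) * Real.exp (-(Real.sqrt (2*δ)) * (|x| - α))) :
    (0 < α ∧ α < 1) ∧
    (Real.sqrt (2*δ) * (1 - α^2) = 2*α ∧
      (∀ x : ℝ, 0 < x → Real.sqrt (2*δ) * (1 - x^2) = 2*x → x = α)) ∧
    ContDiff ℝ 1 u ∧
    ((∀ x : ℝ, 0 ≤ x → -1 ≤ deriv u x) ↔ 2*lam*α ≤ 1) := by
  set s := Real.sqrt (2*δ) with hs_def
  have hs : 0 < s := Real.sqrt_pos.mpr (by linarith)
  have hs2 : s^2 = 2*δ := Real.sq_sqrt (by linarith)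
  set t := Real.sqrt (1/(2*δ) + 1) with ht_def
  have ht : 0 < t := Real.sqrt_pos.mpr (by positivity)
  have ht2 : t^2 = 1/(2*δ) + 1 := Real.sq_sqrt (by positivity)
  have hα' : α = t - 1/s := by rw [hα]; ring
  have h1s : (1/s)^2 = 1/(2*δ) := by rw [div_pow, one_pow, hs2]
  have ht2' : t^2 = (1/s)^2 + 1 := by rw [ht2, h1s]
  have h1 : 1/s < t := by nlinarith [one_div_pos.mpr hs]
  have hα0 : 0 < α := by rw [hα']; linarith
  have hα1 : α < 1 := by
    have : t < 1 + 1/s := by nlinarith [one_div_pos.mpr hs]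
    rw [hα']; linarith
  have hsα : s*α = s*t - 1 := by rw [hα']; field_simp
  have hst : s^2*t^2 = 1 + s^2 := by rw [hs2, ht2]; field_simp
  have key : s * (1 - α^2) = 2*α := by
    have key2 : s*(s*(1-α^2)) = s*(2*α) := by
      linear_combination (-(s*α + s*t - 1) - 2) * hsα - hst
    exact mul_left_cancel₀ hs.ne' key2
  have uniq : ∀ x : ℝ, 0 < x → s * (1 - x^2) = 2*x → x = α := by
    intro x hx hEq
    have h0 : (x - α)*(s*(x+α)+2) = 0 := by linear_combination key - hEq
    have h2 : 0 < s*(x+α)+2 := by nlinarith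
    rcases mul_eq_zero.mp h0 with h | h
    · linarith
    · linarith
  -- derivative candidate
  set c := lam*(1-α^2) with hc_def
  have hc : 0 < c := by nlinarith
  have hsc : s*c = 2*lam*α := by
    rw [hc_def]; linear_combination lam * key
  set g : ℝ → ℝ := fun x => if |x| ≤ α then -(2*lam)*x else
      (if 0 ≤ x then -(s*c)*Real.exp (-s*(x-α)) else (s*c)*Real.exp (s*(x+α))) with hg_def
  -- the three smooth pieces
  set f₁ : ℝ → ℝ := fun y => -lam*y^2 + lam with hf₁_def
  set f₂ : ℝ → ℝ := fun y => c * Real.exp (-s*(y-α)) with hf₂_def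
  set f₃ : ℝ → ℝ := fun y => c * Real.exp (s*(y+α)) with hf₃_def
  have hd₁ : ∀ x : ℝ, HasDerivAt f₁ (-(2*lam)*x) x := by
    intro x
    have h0 : HasDerivAt (fun y : ℝ => y^2) (2*x) x := by simpa using hasDerivAt_pow 2 x
    have h := (h0.const_mul (-lam)).add_const lam
    exact h.congr_deriv (by ring)
  have hd₂ : ∀ x : ℝ, HasDerivAt f₂ (-(s*c)*Real.exp (-s*(x-α))) x := by
    intro x
    have h1 : HasDerivAt (fun y : ℝ => -s*(y-α)) (-s) x := by
      simpa using ((hasDerivAt_id x).sub_const α).const_mul (-s)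
    have h := (h1.exp).const_mul c
    exact h.congr_deriv (by ring)
  have hd₃ : ∀ x : ℝ, HasDerivAt f₃ ((s*c)*Real.exp (s*(x+α))) x := by
    intro x
    have h1 : HasDerivAt (fun y : ℝ => s*(y+α)) s x := by
      simpa using ((hasDerivAt_id x).add_const α).const_mul s
    have h := (h1.exp).const_mul c
    exact h.congr_deriv (by ring)
  -- pointwise descriptions of u
  have hu₁ : ∀ y : ℝ, |y| ≤ α → u y = f₁ y := by
    intro y hy; rw [hu y, if_pos hy]
  have hu₂ : ∀ y : ℝ, α < y → u y = f₂ y := by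
    intro y hy
    have hy0 : 0 < y := lt_trans hα0 hy
    have habs : |y| = y := abs_of_pos hy0
    rw [hu y, habs, if_neg (not_le.mpr hy)]
  have hu₃ : ∀ y : ℝ, y < -α → u y = f₃ y := by
    intro y hy
    have hy0 : y < 0 := by linarith
    have habs : |y| = -y := abs_of_neg hy0
    have hgt : ¬ |y| ≤ α := by rw [habs]; push_neg; linarith
    rw [hu y, if_neg hgt, habs, show -s * (-y - α) = s*(y+α) from by ring]
  have huα : u α = f₂ α := by
    rw [hu₁ α (le_of_eq (abs_of_pos hα0))]
    show -lam*α^2 + lam = c * Real.exp (-s*(α-α))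
    rw [show -s*(α-α) = 0 from by ring, Real.exp_zero, hc_def]; ring
  have huα' : u (-α) = f₃ (-α) := by
    rw [hu₁ (-α) (by rw [abs_neg, abs_of_pos hα0])]
    show -lam*(-α)^2 + lam = c * Real.exp (s*((-α)+α))
    rw [show s*((-α)+α) = 0 from by ring, Real.exp_zero, hc_def]; ring
  -- pointwise description of g
  have hg₁ : ∀ y : ℝ, |y| ≤ α → g y = -(2*lam)*y := fun y hy => if_pos hy
  have hg₂ : ∀ y : ℝ, α < y → g y = -(s*c)*Real.exp (-s*(y-α)) := by
    intro y hy
    have hy0 : 0 < y := lt_trans hα0 hy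
    have hnle : ¬ |y| ≤ α := not_le.mpr (by rwa [abs_of_pos hy0])
    rw [hg_def]; simp only [if_neg hnle, if_pos hy0.le]
  have hg₃ : ∀ y : ℝ, y < -α → g y = (s*c)*Real.exp (s*(y+α)) := by
    intro y hy
    have hy0 : y < 0 := by linarith
    have hnle : ¬ |y| ≤ α := not_le.mpr (by rw [abs_of_neg hy0]; linarith)
    rw [hg_def]; simp only [if_neg hnle, if_neg (not_le.mpr hy0)]
  have hgα : g α = -(s*c)*Real.exp (-s*(α-α)) := by
    rw [hg₁ α (le_of_eq (abs_of_pos hα0)),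
      show -s*(α-α) = 0 from by ring, Real.exp_zero, hsc]; ring
  have hgα' : g (-α) = (s*c)*Real.exp (s*((-α)+α)) := by
    rw [hg₁ (-α) (by rw [abs_neg, abs_of_pos hα0]),
      show s*((-α)+α) = 0 from by ring, Real.exp_zero, hsc]; ring
  -- HasDerivAt u (g x) x everywhere
  have hderiv : ∀ x : ℝ, HasDerivAt u (g x) x := by
    intro x
    rcases lt_trichotomy (|x|) α with h | h | h
    · -- interior of parabola region
      rw [hg₁ x h.le]
      refine (hd₁ x).congr_of_eventuallyEq ?_
      have hop : IsOpen {y : ℝ | |y| < α} := isOpen_lt continuous_abs continuous_const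
      filter_upwards [hop.mem_nhds h] with y hy
      exact hu₁ y (le_of_lt hy)
    · -- boundary
      rcases (abs_eq hα0.le).mp h with hxeq | hxeq
      · -- x = α
        rw [hxeq, hg₁ α (le_of_eq (abs_of_pos hα0))]
        have hleft : HasDerivWithinAt u (-(2*lam)*α) (Set.Iic α) α := by
          refine ((hd₁ α).hasDerivWithinAt).congr_of_eventuallyEq ?_
            (hu₁ α (le_of_eq (abs_of_pos hα0)))
          have h1 : ∀ᶠ y in nhdsWithin α (Set.Iic α), 0 < y :=
            eventually_nhdsWithin_of_eventually_nhds (eventually_gt_nhds hα0)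
          filter_upwards [h1, self_mem_nhdsWithin] with y hy1 hy2
          exact hu₁ y (abs_le.mpr ⟨by linarith, hy2⟩)
        have hright : HasDerivWithinAt u (-(2*lam)*α) (Set.Ici α) α := by
          have h2 : HasDerivWithinAt f₂ (-(2*lam)*α) (Set.Ici α) α := by
            have h3 := (hd₂ α).hasDerivWithinAt (s := Set.Ici α)
            have h4 : -(s*c)*Real.exp (-s*(α-α)) = -(2*lam)*α := by
              rw [show -s*(α-α) = 0 from by ring, Real.exp_zero, hsc]; ring
            rwa [h4] at h3
          refine h2.congr_of_eventuallyEq ?_ huα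
          filter_upwards [self_mem_nhdsWithin] with y hy
          rcases eq_or_lt_of_le (Set.mem_Ici.mp hy) with hyeq | hlt
          · rw [← hyeq]; exact huα
          · exact hu₂ y hlt
        have hcomb := hleft.union hright
        rwa [Set.Iic_union_Ici, hasDerivWithinAt_univ] at hcomb
      · -- x = -α
        rw [hxeq, hg₁ (-α) (by rw [abs_neg, abs_of_pos hα0])]
        have hleft : HasDerivWithinAt u (-(2*lam)*(-α)) (Set.Iic (-α)) (-α) := by
          have h3 := (hd₃ (-α)).hasDerivWithinAt (s := Set.Iic (-α))
          have h4 : (s*c)*Real.exp (s*((-α)+α)) = -(2*lam)*(-α) := by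
            rw [show s*((-α)+α) = 0 from by ring, Real.exp_zero, hsc]; ring
          rw [h4] at h3
          refine h3.congr_of_eventuallyEq ?_ huα'
          filter_upwards [self_mem_nhdsWithin] with y hy
          rcases eq_or_lt_of_le (Set.mem_Iic.mp hy) with hyeq | hlt
          · rw [hyeq]; exact huα'
          · exact hu₃ y hlt
        have hright : HasDerivWithinAt u (-(2*lam)*(-α)) (Set.Ici (-α)) (-α) := by
          refine ((hd₁ (-α)).hasDerivWithinAt).congr_of_eventuallyEq ?_
            (hu₁ (-α) (by rw [abs_neg, abs_of_pos hα0]))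
          have h1 : ∀ᶠ y in nhdsWithin (-α) (Set.Ici (-α)), y < α :=
            eventually_nhdsWithin_of_eventually_nhds (eventually_lt_nhds (by linarith))
          filter_upwards [h1, self_mem_nhdsWithin] with y hy1 hy2
          exact hu₁ y (abs_le.mpr ⟨hy2, le_of_lt hy1⟩)
        have hcomb := hleft.union hright
        rwa [Set.Iic_union_Ici, hasDerivWithinAt_univ] at hcomb
    · -- exponential region
      rcases le_or_gt 0 x with hx0 | hx0
      · have hxα : α < x := by rwa [abs_of_nonneg hx0] at h
        rw [hg₂ x hxα]
        refine (hd₂ x).congr_of_eventuallyEq ?_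
        have hop : IsOpen {y : ℝ | α < y} := isOpen_lt continuous_const continuous_id
        filter_upwards [hop.mem_nhds hxα] with y hy
        exact hu₂ y hy
      · have hxα : x < -α := by rw [abs_of_neg hx0] at h; linarith
        rw [hg₃ x hxα]
        refine (hd₃ x).congr_of_eventuallyEq ?_
        have hop : IsOpen {y : ℝ | y < -α} := isOpen_lt continuous_id continuous_const
        filter_upwards [hop.mem_nhds hxα] with y hy
        exact hu₃ y hy
  have hdiff : Differentiable ℝ u := fun x => (hderiv x).differentiableAt
  have hderiv_eq : deriv u = g := funext fun x => (hderiv x).deriv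
  -- continuity of g
  have hcont₁ : Continuous (fun y : ℝ => -(2*lam)*y) := continuous_const.mul continuous_id
  have hcont₂ : Continuous (fun y : ℝ => -(s*c)*Real.exp (-s*(y-α))) :=
    continuous_const.mul (Real.continuous_exp.comp
      (continuous_const.mul (continuous_id.sub continuous_const)))
  have hcont₃ : Continuous (fun y : ℝ => (s*c)*Real.exp (s*(y+α))) :=
    continuous_const.mul (Real.continuous_exp.comp
      (continuous_const.mul (continuous_id.add continuous_const)))
  have hcontg : Continuous g := by
    rw [continuous_iff_continuousAt]
    intro x
    rcases lt_trichotomy (|x|) α with h | h | h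
    · refine hcont₁.continuousAt.congr ?_
      have hop : IsOpen {y : ℝ | |y| < α} := isOpen_lt continuous_abs continuous_const
      filter_upwards [hop.mem_nhds h] with y hy
      exact (hg₁ y (le_of_lt hy)).symm
    · rcases (abs_eq hα0.le).mp h with hxeq | hxeq
      · rw [hxeq]
        have hL : ContinuousWithinAt g (Set.Iic α) α := by
          refine (hcont₁.continuousWithinAt).congr_of_eventuallyEq ?_
            (hg₁ α (le_of_eq (abs_of_pos hα0)))
          have h1 : ∀ᶠ y in nhdsWithin α (Set.Iic α), 0 < y :=
            eventually_nhdsWithin_of_eventually_nhds (eventually_gt_nhds hα0)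
          filter_upwards [h1, self_mem_nhdsWithin] with y hy1 hy2
          exact hg₁ y (abs_le.mpr ⟨by linarith, hy2⟩)
        have hR : ContinuousWithinAt g (Set.Ici α) α := by
          refine (hcont₂.continuousWithinAt).congr_of_eventuallyEq ?_ hgα
          filter_upwards [self_mem_nhdsWithin] with y hy
          rcases eq_or_lt_of_le (Set.mem_Ici.mp hy) with hyeq | hlt
          · rw [← hyeq]; exact hgα
          · exact hg₂ y hlt
        have hcomb := continuousWithinAt_union.mpr ⟨hL, hR⟩
        rwa [Set.Iic_union_Ici, continuousWithinAt_univ] at hcomb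
      · rw [hxeq]
        have hL : ContinuousWithinAt g (Set.Iic (-α)) (-α) := by
          refine (hcont₃.continuousWithinAt).congr_of_eventuallyEq ?_ hgα'
          filter_upwards [self_mem_nhdsWithin] with y hy
          rcases eq_or_lt_of_le (Set.mem_Iic.mp hy) with hyeq | hlt
          · rw [hyeq]; exact hgα'
          · exact hg₃ y hlt
        have hR : ContinuousWithinAt g (Set.Ici (-α)) (-α) := by
          refine (hcont₁.continuousWithinAt).congr_of_eventuallyEq ?_
            (hg₁ (-α) (by rw [abs_neg, abs_of_pos hα0]))
          have h1 : ∀ᶠ y in nhdsWithin (-α) (Set.Ici (-α)), y < α :=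
            eventually_nhdsWithin_of_eventually_nhds (eventually_lt_nhds (by linarith))
          filter_upwards [h1, self_mem_nhdsWithin] with y hy1 hy2
          exact hg₁ y (abs_le.mpr ⟨hy2, le_of_lt hy1⟩)
        have hcomb := continuousWithinAt_union.mpr ⟨hL, hR⟩
        rwa [Set.Iic_union_Ici, continuousWithinAt_univ] at hcomb
    · rcases le_or_gt 0 x with hx0 | hx0
      · have hxα : α < x := by rwa [abs_of_nonneg hx0] at h
        refine hcont₂.continuousAt.congr ?_
        have hop : IsOpen {y : ℝ | α < y} := isOpen_lt continuous_const continuous_id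
        filter_upwards [hop.mem_nhds hxα] with y hy
        exact (hg₂ y hy).symm
      · have hxα : x < -α := by rw [abs_of_neg hx0] at h; linarith
        refine hcont₃.continuousAt.congr ?_
        have hop : IsOpen {y : ℝ | y < -α} := isOpen_lt continuous_id continuous_const
        filter_upwards [hop.mem_nhds hxα] with y hy
        exact (hg₃ y hy).symm
  have hcd : ContDiff ℝ 1 u :=
    contDiff_one_iff_deriv.mpr ⟨hdiff, by rw [hderiv_eq]; exact hcontg⟩
  refine ⟨⟨hα0, hα1⟩, ⟨key, uniq⟩, hcd, ?_⟩
  constructor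
  · intro hAll
    have h5 := hAll α hα0.le
    rw [hderiv_eq, hg₁ α (le_of_eq (abs_of_pos hα0))] at h5
    linarith
  · intro hle x hx
    rw [hderiv_eq]
    by_cases hcase : |x| ≤ α
    · rw [hg₁ x hcase]
      have hxle : x ≤ α := le_trans (le_abs_self x) hcase
      nlinarith [mul_nonneg hlam.le (sub_nonneg.mpr hxle)]
    · have hxα : α < x := by
        rw [abs_of_nonneg hx] at hcase; exact not_le.mp hcase
      rw [hg₂ x hxα]
      have hE : Real.exp (-s*(x-α)) ≤ 1 := Real.exp_le_one_iff.mpr (by nlinarith)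
      have hE0 : 0 < Real.exp (-s*(x-α)) := Real.exp_pos _
      nlinarith [mul_pos hs hc, hsc]
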